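/- Let G be a unit polynomial in one complex variable z of degree k ≥ 1, and let α > 0. Then the two-dimensional Lebesgue measure of the set Λ = { z in the open unit disk Δ : |G(z)| ≤ α^k } satisfies m(Λ) ≤ 48 α. -/

import Mathlib

open MeasureTheory Finset Metric
open scoped ENNReal NNReal Real


lemma lint_bump (t c : ℝ) (hc : 0 < c) :
    ∫⁻ y : ℝ, ENNReal.ofReal (max 0 (Real.log (c / |y - t|)))
      ≤ ENNReal.ofReal (2 * c) := by
  have meas : Measurable fun y : ℝ => Real.log (c / |y - t|) :=
    Real.measurable_log.comp (measurable_const.div ((measurable_id.sub measurable_const).abs))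
  have meas2 : Measurable fun y : ℝ => max 0 (Real.log (c / |y - t|)) :=
    measurable_const.max meas
  rw [lintegral_eq_lintegral_meas_lt (f := fun y : ℝ => max 0 (Real.log (c / |y - t|)))
    volume (ae_of_all _ fun y => le_max_left _ _) meas2.aemeasurable]
  have hset : ∀ s ∈ Set.Ioi (0:ℝ),
      volume {y : ℝ | s < max 0 (Real.log (c / |y - t|))}
        = ENNReal.ofReal (2 * (c * Real.exp (-s))) := by
    intro s hs
    have hs0 : (0:ℝ) < s := hs
    have hsetEq : {y : ℝ | s < max 0 (Real.log (c / |y - t|))}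
        = Metric.ball t (c * Real.exp (-s)) \ {t} := by
      ext y
      simp only [Set.mem_setOf_eq, Set.mem_diff, Metric.mem_ball, Real.dist_eq,
        Set.mem_singleton_iff]
      constructor
      · intro h
        have h' : s < Real.log (c / |y - t|) := by
          rcases max_cases 0 (Real.log (c / |y - t|)) with ⟨h1, h2⟩ | ⟨h1, h2⟩
          · rw [h1] at h; linarith
          · rw [h1] at h; linarith
        have hyt : y ≠ t := by
          rintro rfl
          simp at h'; linarith
        have hpos : (0:ℝ) < |y - t| := abs_pos.mpr (sub_ne_zero.mpr hyt)
        have hq : 0 < c / |y - t| := div_pos hc hpos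
        rw [Real.lt_log_iff_exp_lt hq] at h'
        refine ⟨?_, hyt⟩
        have h2 : |y - t| < c / Real.exp s := by
          rw [lt_div_iff₀ (Real.exp_pos s)]
          calc |y - t| * Real.exp s < c / |y - t| * |y - t| := by
                nlinarith [Real.exp_pos s]
            _ = c := div_mul_cancel₀ c (ne_of_gt hpos)
        rwa [div_eq_mul_inv, ← Real.exp_neg] at h2
      · rintro ⟨hlt, hyt⟩
        have hpos : (0:ℝ) < |y - t| := abs_pos.mpr (sub_ne_zero.mpr hyt)
        have h2 : |y - t| * Real.exp s < c := by
          have hme : Real.exp (-s) * Real.exp s = 1 := by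
            rw [← Real.exp_add]; simp
          nlinarith [Real.exp_pos (-s), Real.exp_pos s]
        have hq : 0 < c / |y - t| := div_pos hc hpos
        have : Real.exp s < c / |y - t| := by
          rw [lt_div_iff₀ hpos]; nlinarith
        have := (Real.lt_log_iff_exp_lt hq).mpr this
        exact lt_of_lt_of_le this (le_max_right _ _)
    rw [hsetEq, measure_diff_null ((Set.finite_singleton t).measure_zero volume),
      Real.volume_ball]
  rw [setLIntegral_congr_fun measurableSet_Ioi
    (fun s hs => hset s hs)]
  have hint : IntegrableOn (fun s : ℝ => 2 * (c * Real.exp (-s))) (Set.Ioi (0:ℝ)) volume := by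
    have := (exp_neg_integrableOn_Ioi 0 (one_pos)).const_mul (2 * c)
    simpa [IntegrableOn, neg_mul, mul_assoc, one_mul] using this
  rw [← ofReal_integral_eq_lintegral_ofReal hint
    (ae_of_all _ fun s => by positivity)]
  apply ENNReal.ofReal_le_ofReal
  rw [MeasureTheory.integral_const_mul, MeasureTheory.integral_const_mul, integral_exp_neg_Ioi]
  simp [Real.exp_zero]

lemma slice_lemma (n : ℕ) (hn : 1 ≤ n) (t : ℕ → ℝ) {ε : ℝ} (hε : 0 < ε) :
    volume {y : ℝ | ∏ i ∈ Finset.range n, |y - t i| ≤ ε ^ n}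
      ≤ ENNReal.ofReal (2 * Real.exp 1 * ε) := by
  set c := Real.exp 1 * ε with hc
  have hc0 : 0 < c := mul_pos (Real.exp_pos 1) hε
  set E := {y : ℝ | ∏ i ∈ Finset.range n, |y - t i| ≤ ε ^ n} with hE
  set N : Set ℝ := ⋃ i ∈ Finset.range n, {t i} with hN
  have hNfin : N.Finite :=
    Set.Finite.biUnion (Finset.range n).finite_toSet fun i _ => Set.finite_singleton _
  have hN0 : volume N = 0 := hNfin.measure_zero volume
  have hkey : ∀ y ∈ E \ N,
      (n : ℝ) ≤ ∑ i ∈ Finset.range n, max 0 (Real.log (c / |y - t i|)) := by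
    rintro y ⟨hyE, hyN⟩
    have hpos : ∀ i ∈ Finset.range n, (0:ℝ) < |y - t i| := by
      intro i hi
      refine abs_pos.mpr (sub_ne_zero.mpr ?_)
      intro h
      exact hyN (Set.mem_biUnion hi (by simp [h]))
    have hlog : ∀ i ∈ Finset.range n,
        1 + Real.log ε - Real.log |y - t i| ≤ max 0 (Real.log (c / |y - t i|)) := by
      intro i hi
      refine le_trans (le_of_eq ?_) (le_max_right _ _)
      rw [Real.log_div (ne_of_gt hc0) (ne_of_gt (hpos i hi)), hc,
        Real.log_mul (Real.exp_ne_zero 1) (ne_of_gt hε), Real.log_exp]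
    have hprodpos : 0 < ∏ i ∈ Finset.range n, |y - t i| := Finset.prod_pos hpos
    have hlp : ∑ i ∈ Finset.range n, Real.log |y - t i| ≤ (n : ℝ) * Real.log ε := by
      rw [← Real.log_prod (fun i hi => ne_of_gt (hpos i hi)), ← Real.log_pow]
      exact Real.log_le_log hprodpos hyE
    have hstep : (n:ℝ) ≤ ∑ i ∈ Finset.range n, (1 + Real.log ε - Real.log |y - t i|) := by
      rw [Finset.sum_sub_distrib, Finset.sum_const, Finset.card_range, nsmul_eq_mul]
      linarith
    exact hstep.trans (Finset.sum_le_sum hlog)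
  have meas_i : ∀ i : ℕ, Measurable fun y : ℝ =>
      ENNReal.ofReal (max 0 (Real.log (c / |y - t i|))) := fun i =>
    (measurable_const.max (Real.measurable_log.comp
      (measurable_const.div ((measurable_id.sub measurable_const).abs)))).ennreal_ofReal
  have hEmeas : volume E = volume (E \ N) := (measure_diff_null hN0).symm
  have chain : (n : ℝ≥0∞) * volume (E \ N) ≤ (n : ℝ≥0∞) * ENNReal.ofReal (2 * c) := by
    calc (n : ℝ≥0∞) * volume (E \ N)
        = ∫⁻ _ in E \ N, (n : ℝ≥0∞) := (setLIntegral_const _ _).symm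
      _ ≤ ∫⁻ y in E \ N, ∑ i ∈ Finset.range n,
            ENNReal.ofReal (max 0 (Real.log (c / |y - t i|))) := by
          refine setLIntegral_mono (Finset.measurable_sum _ fun i _ => meas_i i) ?_
          intro y hy
          calc (n : ℝ≥0∞) = ENNReal.ofReal (n : ℝ) := by
                rw [ENNReal.ofReal_natCast]
            _ ≤ ENNReal.ofReal (∑ i ∈ Finset.range n,
                  max 0 (Real.log (c / |y - t i|))) :=
                ENNReal.ofReal_le_ofReal (hkey y hy)
            _ = ∑ i ∈ Finset.range n,
                  ENNReal.ofReal (max 0 (Real.log (c / |y - t i|))) :=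
                ENNReal.ofReal_sum_of_nonneg fun i _ => le_max_left _ _
      _ ≤ ∫⁻ y, ∑ i ∈ Finset.range n,
            ENNReal.ofReal (max 0 (Real.log (c / |y - t i|))) :=
          setLIntegral_le_lintegral _ _
      _ = ∑ i ∈ Finset.range n, ∫⁻ y,
            ENNReal.ofReal (max 0 (Real.log (c / |y - t i|))) :=
          lintegral_finset_sum _ fun i _ => meas_i i
      _ ≤ ∑ _i ∈ Finset.range n, ENNReal.ofReal (2 * c) :=
          Finset.sum_le_sum fun i _ => lint_bump (t i) c hc0
      _ = (n : ℝ≥0∞) * ENNReal.ofReal (2 * c) := by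
          rw [Finset.sum_const, Finset.card_range, nsmul_eq_mul]
  have hn0 : (n : ℝ≥0∞) ≠ 0 := by
    have : n ≠ 0 := by omega
    simpa using this
  have hcancel := (ENNReal.mul_le_mul_iff_right hn0 (ENNReal.natCast_ne_top n)).mp chain
  rw [hEmeas]
  refine hcancel.trans (le_of_eq ?_)
  rw [hc]; ring_nf


lemma circleIntegral_finset_sum {ι : Type*} (s : Finset ι) (f : ι → ℂ → ℂ) (c : ℂ) (R : ℝ)
    (hf : ∀ i ∈ s, CircleIntegrable (f i) c R) :
    (∮ z in C(c, R), ∑ i ∈ s, f i z) = ∑ i ∈ s, ∮ z in C(c, R), f i z := by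
  simp only [circleIntegral, smul_sum]
  exact intervalIntegral.integral_finset_sum fun i hi => (hf i hi).out

lemma exists_sphere_big (G : Polynomial ℂ) (j : ℕ) :
    ∃ w : ℂ, ‖w‖ = 1 ∧ ‖G.coeff j‖ ≤ ‖G.eval w‖ := by
  obtain ⟨w, hw, hmax'⟩ := (isCompact_sphere (0:ℂ) 1).exists_isMaxOn
    ⟨1, by simp⟩ ((Polynomial.continuous G).norm.continuousOn)
  have hmax : ∀ z ∈ sphere (0:ℂ) 1, ‖G.eval z‖ ≤ ‖G.eval w‖ := fun z hz => hmax' hz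
  have hw1 : ‖w‖ = 1 := mem_sphere_zero_iff_norm.mp hw
  refine ⟨w, hw1, ?_⟩
  by_cases hj0 : G.coeff j = 0
  · simp [hj0]
  have hjn : j ≤ G.natDegree := Polynomial.le_natDegree_of_ne_zero hj0
  set n := G.natDegree
  -- the integrand rewritten as a finite sum of zpow terms
  have heq : Set.EqOn (fun z : ℂ => z ^ (-(j:ℤ)-1) * G.eval z)
      (fun z : ℂ => ∑ l ∈ range (n+1), G.coeff l * z ^ ((l:ℤ) - (j:ℤ) - 1))
      (sphere (0:ℂ) 1) := by
    intro z hz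
    have hz0 : z ≠ 0 := by
      intro h
      rw [h] at hz
      simp at hz
    simp only
    rw [Polynomial.eval_eq_sum_range, Finset.mul_sum]
    refine Finset.sum_congr rfl fun l _ => ?_
    rw [← zpow_natCast z l, mul_comm (z ^ (-(j:ℤ)-1)), mul_assoc, ← zpow_add₀ hz0]
    congr 2
    ring
  have hint : ∀ l ∈ range (n+1), CircleIntegrable
      (fun z : ℂ => G.coeff l * z ^ ((l:ℤ) - (j:ℤ) - 1)) 0 1 := by
    intro l _
    refine ContinuousOn.circleIntegrable zero_le_one ?_
    refine ContinuousOn.mul continuousOn_const ?_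
    refine ContinuousOn.zpow₀ continuousOn_id _ fun z hz => Or.inl ?_
    intro h
    simp only [id_eq] at h
    rw [h] at hz
    simp at hz
  have hsub0 : ∀ m : ℤ, Set.EqOn (fun z : ℂ => z ^ m)
      (fun z : ℂ => (z - 0) ^ m) (sphere (0:ℂ) 1) := by
    intro m z _; simp
  have hzpow_ne : ∀ l : ℕ, l ≠ j →
      (∮ z in C((0:ℂ), 1), z ^ ((l:ℤ) - (j:ℤ) - 1)) = 0 := by
    intro l hlj
    rw [circleIntegral.integral_congr zero_le_one (hsub0 _)]
    refine circleIntegral.integral_sub_zpow_of_ne ?_ _ _ _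
    intro h
    apply hlj
    omega
  have hzpow_j : (∮ z in C((0:ℂ), 1), z ^ ((j:ℤ) - (j:ℤ) - 1))
      = 2 * Real.pi * Complex.I := by
    rw [circleIntegral.integral_congr zero_le_one (hsub0 _)]
    have h1 : (j:ℤ) - (j:ℤ) - 1 = -1 := by ring
    simp only [h1, zpow_neg_one]
    exact circleIntegral.integral_sub_inv_of_mem_ball (mem_ball_self one_pos)
  have hkey : (∮ z in C((0:ℂ), 1), z ^ (-(j:ℤ)-1) * G.eval z)
      = 2 * Real.pi * Complex.I * G.coeff j := by
    rw [circleIntegral.integral_congr zero_le_one heq,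
      circleIntegral_finset_sum _ _ _ _ hint]
    have hpull : ∀ l ∈ range (n+1),
        (∮ z in C((0:ℂ), 1), G.coeff l * z ^ ((l:ℤ) - (j:ℤ) - 1))
          = G.coeff l * ∮ z in C((0:ℂ), 1), z ^ ((l:ℤ) - (j:ℤ) - 1) := by
      intro l _
      simpa [smul_eq_mul] using circleIntegral.integral_smul (G.coeff l)
        (fun z : ℂ => z ^ ((l:ℤ) - (j:ℤ) - 1)) 0 1
    rw [Finset.sum_congr rfl hpull]
    rw [Finset.sum_eq_single j
      (fun l _ hne => by rw [hzpow_ne l hne, mul_zero])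
      (fun habs => absurd (by simp [Nat.lt_succ_iff, hjn]) habs)]
    rw [hzpow_j]
    ring
  have hbound : ‖∮ z in C((0:ℂ), 1), z ^ (-(j:ℤ)-1) * G.eval z‖
      ≤ 2 * Real.pi * 1 * ‖G.eval w‖ := by
    refine circleIntegral.norm_integral_le_of_norm_le_const zero_le_one fun z hz => ?_
    have hz1 : ‖z‖ = 1 := mem_sphere_zero_iff_norm.mp hz
    rw [norm_mul, norm_zpow, hz1, one_zpow, one_mul]
    exact hmax z hz
  rw [hkey] at hbound
  have h2 : ‖(2 : ℂ) * Real.pi * Complex.I * G.coeff j‖ = 2 * Real.pi * ‖G.coeff j‖ := by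
    simp [norm_mul, Complex.norm_I, abs_of_nonneg Real.pi_pos.le, Complex.norm_real]
  rw [h2] at hbound
  have hπ : 0 < 2 * Real.pi := Real.two_pi_pos
  nlinarith [Real.pi_pos]


section Aux

lemma multiset_prod_map_nonneg {α : Type*} (T : Multiset α) (f : α → ℝ)
    (h0 : ∀ a ∈ T, 0 ≤ f a) : 0 ≤ (T.map f).prod := by
  refine Multiset.prod_nonneg ?_
  intro x hx
  obtain ⟨a, ha, rfl⟩ := Multiset.mem_map.mp hx
  exact h0 a ha

lemma multiset_prod_map_le {α : Type*} (T : Multiset α) (f g : α → ℝ)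
    (h0 : ∀ a ∈ T, 0 ≤ f a) (h : ∀ a ∈ T, f a ≤ g a) :
    (T.map f).prod ≤ (T.map g).prod := by
  induction T using Multiset.induction_on with
  | empty => simp
  | cons a T ih =>
    simp only [Multiset.map_cons, Multiset.prod_cons]
    have hfa := h0 a (Multiset.mem_cons_self a T)
    have hga := (h0 a (Multiset.mem_cons_self a T)).trans (h a (Multiset.mem_cons_self a T))
    refine mul_le_mul (h a (Multiset.mem_cons_self a T))
      (ih (fun b hb => h0 b (Multiset.mem_cons_of_mem hb))
          (fun b hb => h b (Multiset.mem_cons_of_mem hb)))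
      (multiset_prod_map_nonneg T f fun b hb => h0 b (Multiset.mem_cons_of_mem hb)) hga

lemma multiset_prod_map_const_mul {α : Type*} (T : Multiset α) (r : ℝ) (f : α → ℝ) :
    (T.map fun a => r * f a).prod = r ^ Multiset.card T * (T.map f).prod := by
  rw [Multiset.prod_map_mul (f := fun _ => r) (g := f)]
  congr 1
  rw [Multiset.map_const', Multiset.prod_replicate]

lemma list_prod_eq_range_prod (L : List ℝ) (f : ℝ → ℝ) :
    (L.map f).prod = ∏ i ∈ Finset.range L.length, f (L.getD i 0) := by
  induction L with
  | nil => simp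
  | cons a L ih =>
    rw [List.map_cons, List.prod_cons, List.length_cons, Finset.prod_range_succ']
    simp only [List.getD_cons_succ, List.getD_cons_zero]
    rw [← ih]
    ring

end Aux

/-- The sublevel set {|G| ≤ α^k} of a unit polynomial of degree k in the unit disk
has measure at most 48α. -/
theorem stmt_4 (k : ℕ) (hk : 1 ≤ k) (G : Polynomial ℂ) (hdeg : G.natDegree = k)
    (hunit : (∀ j, ‖G.coeff j‖ ≤ 1) ∧ ∃ j, ‖G.coeff j‖ = 1)
    (α : ℝ) (hα : 0 < α) :
    volume {z ∈ Metric.ball (0 : ℂ) 1 | ‖G.eval z‖ ≤ α ^ k} ≤ ENNReal.ofReal (48 * α) := by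
  classical
  obtain ⟨hcoe, j, hj⟩ := hunit
  by_cases hα3 : (1:ℝ)/3 ≤ α
  · -- trivial case : the ball has volume π ≤ 48 α
    refine le_trans (measure_mono (Set.sep_subset _ _)) ?_
    rw [Complex.volume_ball]
    have hπ : ((NNReal.pi : ℝ≥0∞)) ≤ ENNReal.ofReal (48 * α) := by
      rw [← ENNReal.ofReal_coe_nnreal]
      apply ENNReal.ofReal_le_ofReal
      have hpi : (NNReal.pi : ℝ) = Real.pi := rfl
      rw [hpi]
      nlinarith [Real.pi_lt_d2]
    simpa using hπ
  push_neg at hα3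
  have hα1 : 3 * α < 1 := by linarith
  -- a point on the unit circle where |G| ≥ 1
  obtain ⟨w, hw1, hwge⟩ := exists_sphere_big G j
  have hwG : (1:ℝ) ≤ ‖G.eval w‖ := hj ▸ hwge
  -- factor G over its roots
  have hsplit : G.Splits := IsAlgClosed.splits G
  have hcard : Multiset.card G.roots = k := by
    rw [Polynomial.splits_iff_card_roots.mp hsplit, hdeg]
  have heval : ∀ z : ℂ, G.eval z
      = G.leadingCoeff * ((G.roots.map fun a => z - a)).prod := by
    intro z
    conv_lhs => rw [hsplit.eq_prod_roots]
    rw [Polynomial.eval_mul, Polynomial.eval_C, Polynomial.eval_multiset_prod,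
      Multiset.map_map]
    simp [Function.comp]
  have hnorm : ∀ z : ℂ, ‖G.eval z‖
      = ‖G.leadingCoeff‖ * ((G.roots.map fun a => ‖z - a‖)).prod := by
    intro z
    rw [heval z, norm_mul]
    congr 1
    rw [show ∀ u : ℂ, ‖u‖ = normHom u from fun _ => rfl,
      map_multiset_prod (normHom : ℂ →*₀ ℝ), Multiset.map_map]
    rfl
  set S := G.roots.filter (fun a => ‖a‖ ≤ 2) with hS
  set F := G.roots.filter (fun a => ¬ ‖a‖ ≤ 2) with hF
  have hSF : S + F = G.roots := Multiset.filter_add_not _ _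
  set m := Multiset.card S with hm
  have hmk : m + Multiset.card F = k := by
    rw [hm, ← hcard, ← hSF, Multiset.card_add]
  have hmle : m ≤ k := le_of_add_le_left hmk.le
  -- the key pointwise estimate
  have key : ∀ z : ℂ, ‖z‖ < 1 → ‖G.eval z‖ ≤ α ^ k →
      (S.map fun a => ‖z - a‖).prod ≤ (3*α) ^ k := by
    intro z hz hGz
    have hPsz0 : 0 ≤ (S.map fun a => ‖z - a‖).prod :=
      multiset_prod_map_nonneg _ _ fun a _ => norm_nonneg _
    have hPfz0 : 0 ≤ (F.map fun a => ‖z - a‖).prod :=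
      multiset_prod_map_nonneg _ _ fun a _ => norm_nonneg _
    have h1 : (1:ℝ) ≤ ‖G.leadingCoeff‖ *
        ((S.map fun a => ‖w - a‖).prod * (F.map fun a => ‖w - a‖).prod) := by
      have := hnorm w
      rw [← hSF, Multiset.map_add, Multiset.prod_add] at this
      linarith [hwG, this.symm.le, this.le]
    have h2 : (S.map fun a => ‖w - a‖).prod ≤ 3 ^ m := by
      have : (S.map fun a => ‖w - a‖).prod ≤ (S.map fun _ => (3:ℝ)).prod := by
        refine multiset_prod_map_le _ _ _ (fun a _ => norm_nonneg _) ?_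
        intro a ha
        have ha2 : ‖a‖ ≤ 2 := (Multiset.mem_filter.mp ha).2
        calc ‖w - a‖ ≤ ‖w‖ + ‖a‖ := norm_sub_le w a
          _ ≤ 3 := by rw [hw1]; linarith
      rwa [Multiset.map_const', Multiset.prod_replicate] at this
    have h3 : (F.map fun a => ‖w - a‖).prod
        ≤ 3 ^ Multiset.card F * (F.map fun a => ‖z - a‖).prod := by
      have hle : (F.map fun a => ‖w - a‖).prod
          ≤ (F.map fun a => 3 * ‖z - a‖).prod := by
        refine multiset_prod_map_le _ _ _ (fun a _ => norm_nonneg _) ?_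
        intro a ha
        have ha2 : 2 < ‖a‖ := lt_of_not_ge (Multiset.mem_filter.mp ha).2
        have hza : ‖a‖ - 1 ≤ ‖z - a‖ := by
          have h := norm_sub_norm_le a z
          rw [norm_sub_rev a z] at h
          linarith
        calc ‖w - a‖ ≤ ‖w‖ + ‖a‖ := norm_sub_le w a
          _ = 1 + ‖a‖ := by rw [hw1]
          _ ≤ 3 * (‖a‖ - 1) := by linarith
          _ ≤ 3 * ‖z - a‖ := by linarith
      rwa [multiset_prod_map_const_mul] at hle
    -- combine
    have hPsw0 : 0 ≤ (S.map fun a => ‖w - a‖).prod :=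
      multiset_prod_map_nonneg _ _ fun a _ => norm_nonneg _
    have hPfw0 : 0 ≤ (F.map fun a => ‖w - a‖).prod :=
      multiset_prod_map_nonneg _ _ fun a _ => norm_nonneg _
    have hc0 : 0 ≤ ‖G.leadingCoeff‖ := norm_nonneg _
    have h4 : (1:ℝ) ≤ ‖G.leadingCoeff‖ *
        (3 ^ m * (3 ^ Multiset.card F * (F.map fun a => ‖z - a‖).prod)) := by
      refine h1.trans ?_
      refine mul_le_mul_of_nonneg_left ?_ hc0
      exact mul_le_mul h2 h3 hPfw0 (by positivity)
    have h5 : (S.map fun a => ‖z - a‖).prod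
        ≤ 3 ^ k * ‖G.eval z‖ := by
      have hmul := mul_le_mul_of_nonneg_left h4 hPsz0
      rw [mul_one] at hmul
      calc (S.map fun a => ‖z - a‖).prod
          ≤ (S.map fun a => ‖z - a‖).prod * (‖G.leadingCoeff‖ *
            (3 ^ m * (3 ^ Multiset.card F * (F.map fun a => ‖z - a‖).prod))) := hmul
        _ = 3 ^ (m + Multiset.card F) * (‖G.leadingCoeff‖ *
            ((S.map fun a => ‖z - a‖).prod * (F.map fun a => ‖z - a‖).prod)) := by
            rw [pow_add]; ring
        _ = 3 ^ k * ‖G.eval z‖ := by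
            rw [hmk, hnorm z, ← hSF, Multiset.map_add, Multiset.prod_add]
    calc (S.map fun a => ‖z - a‖).prod ≤ 3 ^ k * ‖G.eval z‖ := h5
      _ ≤ 3 ^ k * α ^ k := by
          refine mul_le_mul_of_nonneg_left hGz (by positivity)
      _ = (3*α) ^ k := (mul_pow 3 α k).symm
  -- case m = 0 : the set is empty
  rcases Nat.eq_zero_or_pos m with hm0 | hmpos
  · have hSempty : S = 0 := Multiset.card_eq_zero.mp hm0
    have hempty : {z ∈ Metric.ball (0 : ℂ) 1 | ‖G.eval z‖ ≤ α ^ k} ⊆ ∅ := by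
      rintro z ⟨hz1, hz2⟩
      have hz1' : ‖z‖ < 1 := mem_ball_zero_iff.mp hz1
      have := key z hz1' hz2
      rw [hSempty] at this
      simp only [Multiset.map_zero, Multiset.prod_zero] at this
      have hlt : (3*α) ^ k < 1 := pow_lt_one₀ (by positivity) hα1 (by omega)
      linarith
    refine le_trans (measure_mono hempty) ?_
    simp
  -- main case
  set L : List ℝ := (S.map Complex.im).toList with hL
  have hLlen : L.length = m := by
    rw [hL, Multiset.length_toList, Multiset.card_map]
  set t : ℕ → ℝ := fun i => L.getD i 0 with ht
  have hprod_eq : ∀ y : ℝ,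
      (S.map fun a => |y - a.im|).prod = ∏ i ∈ Finset.range m, |y - t i| := by
    intro y
    have h1 : (S.map fun a => |y - a.im|) = (S.map Complex.im).map fun b => |y - b| := by
      rw [Multiset.map_map]; rfl
    rw [h1, ← Multiset.coe_toList (S.map Complex.im), Multiset.map_coe, Multiset.prod_coe,
      list_prod_eq_range_prod, hLlen]
  set E : Set ℝ := {y : ℝ | ∏ i ∈ Finset.range m, |y - t i| ≤ (3*α) ^ m} with hE
  have hEmeas : MeasurableSet E := by
    have hcont : Continuous fun y : ℝ => ∏ i ∈ Finset.range m, |y - t i| :=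
      continuous_finset_prod _ fun i _ => (continuous_id.sub continuous_const).abs
    exact measurableSet_le hcont.measurable measurable_const
  have hsub : {z ∈ Metric.ball (0 : ℂ) 1 | ‖G.eval z‖ ≤ α ^ k}
      ⊆ Complex.measurableEquivRealProd ⁻¹' ((Set.Ioo (-1:ℝ) 1) ×ˢ E) := by
    rintro z ⟨hz1, hz2⟩
    have hz1' : ‖z‖ < 1 := mem_ball_zero_iff.mp hz1
    rw [Set.mem_preimage, Complex.measurableEquivRealProd_apply, Set.mem_prod]
    constructor
    · -- real part in Ioo
      have : |z.re| < 1 := lt_of_le_of_lt (Complex.abs_re_le_norm z) hz1'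
      simpa [Set.mem_Ioo] using abs_lt.mp this
    · -- imaginary part in E
      show z.im ∈ E
      rw [hE, Set.mem_setOf_eq, ← hprod_eq]
      have hstep : (S.map fun a => |z.im - a.im|).prod ≤ (S.map fun a => ‖z - a‖).prod := by
        refine multiset_prod_map_le _ _ _ (fun a _ => abs_nonneg _) ?_
        intro a _
        have := Complex.abs_im_le_norm (z - a)
        rw [Complex.sub_im] at this
        exact this
      refine hstep.trans ?_
      refine (key z hz1' hz2).trans ?_
      exact pow_le_pow_of_le_one (by positivity) hα1.le hmle
  refine le_trans (measure_mono hsub) ?_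
  rw [Complex.volume_preserving_equiv_real_prod.measure_preimage
    ((measurableSet_Ioo.prod hEmeas).nullMeasurableSet)]
  rw [MeasureTheory.Measure.volume_eq_prod, MeasureTheory.Measure.prod_prod]
  have hIoo : volume (Set.Ioo (-1:ℝ) 1) = ENNReal.ofReal 2 := by
    rw [Real.volume_Ioo]; norm_num
  have hεpos : (0:ℝ) < 3*α := by positivity
  have hslice := slice_lemma m hmpos t hεpos
  rw [hIoo]
  calc ENNReal.ofReal 2 * volume E
      ≤ ENNReal.ofReal 2 * ENNReal.ofReal (2 * Real.exp 1 * (3*α)) :=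
        mul_le_mul_right hslice _
    _ = ENNReal.ofReal (2 * (2 * Real.exp 1 * (3*α))) :=
        (ENNReal.ofReal_mul (by norm_num : (0:ℝ) ≤ 2)).symm
    _ ≤ ENNReal.ofReal (48 * α) := by
        apply ENNReal.ofReal_le_ofReal
        nlinarith [Real.exp_one_lt_d9, Real.exp_pos 1]
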